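/- Let d ≥ 2 and 1 ≤ k ≤ d−1, let Z ⊆ ℝ^d be a convex open set, and let h : Z → ℝ^d be continuously differentiable with invertible differential Dh(z) at every z ∈ Z. Suppose there is a family 𝒮₀ of subsets of {1,…,d}, each of size d−k, such that (a) for every i ∈ {1,…,d} there exist S, S' ∈ 𝒮₀ with S ∩ S' = {i}, and (b) for every S ∈ 𝒮₀ there exists a subset T_S ⊆ {1,…,d} with |T_S| = d−k such that for every i ∈ T_S the component h_i depends only on the coordinates in S. Then there exists a permutation π of {1,…,d} such that for every i ∈ {1,…,d} the component h_{π(i)} depends only on the coordinates in {i}; i.e., h is coordinate-wise up to a permutation of the indices. -/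

import Mathlib

/-- A function `φ` defined on (a subset) `Z ⊆ ℝ^d` *depends only on the coordinates in `S`*
if `φ z = φ z'` for all `z, z' ∈ Z` agreeing on every coordinate in `S`. -/
def DependsOnlyOn {d : ℕ} {Y : Type*} (Z : Set (Fin d → ℝ)) (φ : (Fin d → ℝ) → Y)
    (S : Set (Fin d)) : Prop :=
  ∀ z ∈ Z, ∀ z' ∈ Z, (∀ i ∈ S, z i = z' i) → φ z = φ z'

open Module

section aux
variable {d : ℕ}

lemma pi_single_eq_smul (j : Fin d) (r : ℝ) :
    (Pi.single j r : Fin d → ℝ) = r • (Pi.single j 1 : Fin d → ℝ) := by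
  rw [← Pi.single_smul, smul_eq_mul, mul_one]

lemma aux_lemA {Z : Set (Fin d → ℝ)} (hZopen : IsOpen Z) {φ : (Fin d → ℝ) → ℝ}
    (hφ : ∀ z ∈ Z, DifferentiableAt ℝ φ z) {S : Set (Fin d)}
    (hdep : DependsOnlyOn Z φ S) {j : Fin d} (hj : j ∉ S)
    {z : Fin d → ℝ} (hz : z ∈ Z) :
    fderiv ℝ φ z (Pi.single j 1) = 0 := by
  set e : Fin d → ℝ := Pi.single j 1 with he
  have hline : HasDerivAt (fun t : ℝ => z + t • e) e 0 := by
    simpa using ((hasDerivAt_id (0:ℝ)).smul_const e).const_add z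
  have h0 : z + (0:ℝ) • e = z := by simp
  have hFD : HasFDerivAt φ (fderiv ℝ φ z) ((fun t : ℝ => z + t • e) 0) := by
    simpa [h0] using (hφ z hz).hasFDerivAt
  have hg : HasDerivAt (fun t : ℝ => φ (z + t • e)) (fderiv ℝ φ z e) 0 := by
    exact hFD.comp_hasDerivAt 0 hline
  have hev : (fun t : ℝ => φ (z + t • e)) =ᶠ[nhds (0:ℝ)] (fun _ => φ z) := by
    have hcont : Continuous fun t : ℝ => z + t • e := by continuity
    have hmem : ∀ᶠ t : ℝ in nhds 0, z + t • e ∈ Z := by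
      have hz' : Z ∈ nhds ((fun t : ℝ => z + t • e) 0) := by
        rw [show (fun t : ℝ => z + t • e) 0 = z from h0]
        exact hZopen.mem_nhds hz
      exact hcont.continuousAt.eventually_mem hz'
    filter_upwards [hmem] with t ht
    refine hdep _ ht _ hz fun i hi => ?_
    have hij : i ≠ j := fun hij => hj (hij ▸ hi)
    simp [he, Pi.single_eq_of_ne hij]
  have hconst : HasDerivAt (fun _ : ℝ => φ z) (fderiv ℝ φ z e) 0 :=
    hev.hasDerivAt_iff.mp hg
  exact hconst.unique (hasDerivAt_const _ _)

lemma aux_lemB {Z : Set (Fin d → ℝ)} (hZopen : IsOpen Z) (hZconv : Convex ℝ Z)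
    {φ : (Fin d → ℝ) → ℝ} (hφ : ∀ z ∈ Z, DifferentiableAt ℝ φ z) {i : Fin d}
    (hp : ∀ z ∈ Z, ∀ j : Fin d, j ≠ i → fderiv ℝ φ z (Pi.single j 1) = 0) :
    DependsOnlyOn Z φ ({i} : Set (Fin d)) := by
  intro z hz z' hz' hagree
  set v : Fin d → ℝ := z' - z with hv
  have hzi := hagree i rfl
  have hvi : v i = 0 := by simp [hv, hzi]
  have hfv : ∀ w ∈ Z, fderiv ℝ φ w v = 0 := by
    intro w hw
    have hvs : v = ∑ l : Fin d, Pi.single l (v l) := (Finset.univ_sum_single v).symm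
    rw [hvs, map_sum]
    refine Finset.sum_eq_zero fun l _ => ?_
    rcases eq_or_ne l i with rfl | hl
    · simp [hvi]
    · rw [pi_single_eq_smul, map_smul, hp w hw l hl, smul_zero]
  have hmem : ∀ t ∈ Set.Icc (0:ℝ) 1, z + t • v ∈ Z := by
    intro t ht
    have hzt : z + t • v = (1 - t) • z + t • z' := by
      funext x; simp [hv]; ring
    rw [hzt]
    exact hZconv hz hz' (by linarith [ht.2]) ht.1 (by ring)
  have hderiv : ∀ t ∈ Set.Icc (0:ℝ) 1, HasDerivAt (fun s : ℝ => φ (z + s • v)) 0 t := by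
    intro t ht
    have hline : HasDerivAt (fun s : ℝ => z + s • v) v t := by
      simpa using ((hasDerivAt_id t).smul_const v).const_add z
    have hw := hmem t ht
    have hFD : HasFDerivAt φ (fderiv ℝ φ (z + t • v)) ((fun s : ℝ => z + s • v) t) :=
      (hφ _ hw).hasFDerivAt
    have := hFD.comp_hasDerivAt t hline
    rw [hfv _ hw] at this; exact this
  have hcont : ContinuousOn (fun s : ℝ => φ (z + s • v)) (Set.Icc 0 1) :=
    fun t ht => ((hderiv t ht).continuousAt).continuousWithinAt
  have hc := constant_of_has_deriv_right_zero hcont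
    (fun t ht => ((hderiv t (Set.mem_Icc_of_Ico ht)).hasDerivWithinAt)) 1 (by norm_num)
  have h1 : z + v = z' := by rw [hv]; abel
  simpa [h1] using hc.symm

lemma aux_linalg (A : (Fin d → ℝ) →L[ℝ] (Fin d → ℝ)) (hA : Function.Bijective A)
    (C U : Finset (Fin d))
    (hzero : ∀ i ∈ U, ∀ j : Fin d, j ∉ C → A (Pi.single j 1) i = 0) :
    U.card ≤ C.card := by
  classical
  by_contra hlt
  push_neg at hlt
  set e : (Fin d → ℝ) ≃ₗ[ℝ] (Fin d → ℝ) :=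
    LinearEquiv.ofBijective (A : (Fin d → ℝ) →ₗ[ℝ] (Fin d → ℝ)) hA with hedef
  set V : Submodule ℝ (Fin d → ℝ) :=
    Submodule.span ℝ (Set.range fun j : {j : Fin d // j ∈ Cᶜ} => (Pi.single (j : Fin d) 1 : Fin d → ℝ)) with hVdef
  have hli : LinearIndependent ℝ (fun j : {j : Fin d // j ∈ Cᶜ} => (Pi.single (j : Fin d) 1 : Fin d → ℝ)) := by
    have h1 := (Pi.basisFun ℝ (Fin d)).linearIndependent
    have h2 := h1.comp (fun j : {j : Fin d // j ∈ Cᶜ} => (j : Fin d)) Subtype.val_injective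
    simpa [Function.comp_def, Pi.basisFun_apply] using h2
  have hV : finrank ℝ V = Cᶜ.card := by
    rw [hVdef, finrank_span_eq_card hli, Fintype.card_coe]
  set W : Submodule ℝ (Fin d → ℝ) :=
    { carrier := {w | ∀ i ∈ U, w i = 0}
      add_mem' := fun ha hb i hi => by simp_all
      zero_mem' := fun i hi => rfl
      smul_mem' := fun c w hw i hi => by simp_all } with hWdef
  have hmap : Submodule.map (e : (Fin d → ℝ) →ₗ[ℝ] (Fin d → ℝ)) V ≤ W := by
    rw [hVdef, Submodule.map_span]
    refine Submodule.span_le.mpr ?_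
    rintro _ ⟨_, ⟨j, rfl⟩, rfl⟩
    intro i hi
    have hj : (j : Fin d) ∉ C := Finset.mem_compl.mp j.2
    show e (Pi.single (j : Fin d) 1 : Fin d → ℝ) i = 0
    rw [hedef, LinearEquiv.ofBijective_apply]
    exact hzero i hi _ hj
  have hWle : W ≤ Submodule.span ℝ
      ((Uᶜ.image fun i : Fin d => (Pi.single i 1 : Fin d → ℝ)) : Set (Fin d → ℝ)) := by
    intro w hw
    have hw' : ∀ i ∈ U, w i = 0 := hw
    have h1 : ∑ i ∈ Uᶜ, Pi.single i (w i) + ∑ i ∈ U, Pi.single i (w i) = w := by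
      rw [Finset.sum_compl_add_sum]; exact Finset.univ_sum_single w
    have h2 : ∑ i ∈ U, Pi.single i (w i) = 0 :=
      Finset.sum_eq_zero fun i hi => by rw [hw' i hi]; simp
    have hrepr : w = ∑ i ∈ Uᶜ, w i • (Pi.single i 1 : Fin d → ℝ) := by
      conv_lhs => rw [← h1]
      rw [h2, add_zero]
      exact Finset.sum_congr rfl fun i _ => pi_single_eq_smul i (w i)
    rw [hrepr]
    exact Submodule.sum_mem _ fun i hi => Submodule.smul_mem _ _
      (Submodule.subset_span (Finset.mem_coe.mpr (Finset.mem_image_of_mem _ hi)))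
  have hW : finrank ℝ W ≤ Uᶜ.card :=
    calc finrank ℝ W
        ≤ finrank ℝ (Submodule.span ℝ
            ((Uᶜ.image fun i : Fin d => (Pi.single i 1 : Fin d → ℝ)) : Set (Fin d → ℝ))) :=
          Submodule.finrank_mono hWle
      _ ≤ (Uᶜ.image fun i : Fin d => (Pi.single i 1 : Fin d → ℝ)).card := finrank_span_finset_le_card _
      _ ≤ Uᶜ.card := Finset.card_image_le
  have hchain : Cᶜ.card ≤ Uᶜ.card :=
    calc Cᶜ.card = finrank ℝ V := hV.symm
      _ = finrank ℝ (Submodule.map (e : (Fin d → ℝ) →ₗ[ℝ] (Fin d → ℝ)) V) :=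
          (e.finrank_map_eq V).symm
      _ ≤ finrank ℝ W := Submodule.finrank_mono hmap
      _ ≤ Uᶜ.card := hW
  have hUd : U.card ≤ d := by
    simpa using Finset.card_le_card (Finset.subset_univ U)
  have hCd : C.card ≤ d := by
    simpa using Finset.card_le_card (Finset.subset_univ C)
  rw [Finset.card_compl, Finset.card_compl, Fintype.card_fin] at hchain
  omega

end aux

/-- Let `d ≥ 2`, `1 ≤ k ≤ d − 1`, `Z ⊆ ℝ^d` a (nonempty) convex open set,
and `h : Z → ℝ^d` continuously differentiable with invertible differential at every point.
Suppose `𝒮₀` is a family of subsets of `{1,…,d}`, each of size `d − k`, such that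
(a) every singleton `{i}` arises as the intersection of two members of `𝒮₀`, and
(b) for every `S ∈ 𝒮₀` there is a set `T_S` of `d − k` indices such that each component
`hᵢ`, `i ∈ T_S`, depends only on the coordinates in `S`.
Then there is a permutation `π` of `{1,…,d}` such that each component `h_{π(i)}` depends
only on the coordinate `i`; i.e., `h` is coordinate-wise up to a permutation. -/
theorem coordinatewise_of_sharing_constraints {d k : ℕ}
    (hd : 2 ≤ d) (hk1 : 1 ≤ k) (hkd : k ≤ d - 1)
    {Z : Set (Fin d → ℝ)} (hZopen : IsOpen Z) (hZconv : Convex ℝ Z) (hZne : Z.Nonempty)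
    (h : (Fin d → ℝ) → (Fin d → ℝ)) (hC1 : ContDiffOn ℝ 1 h Z)
    (hinv : ∀ z ∈ Z, Function.Bijective (fderiv ℝ h z))
    (𝒮₀ : Set (Finset (Fin d)))
    (hcard : ∀ S ∈ 𝒮₀, S.card = d - k)
    (ha : ∀ i : Fin d, ∃ S ∈ 𝒮₀, ∃ S' ∈ 𝒮₀, S ∩ S' = ({i} : Finset (Fin d)))
    (hb : ∀ S ∈ 𝒮₀, ∃ T : Finset (Fin d), T.card = d - k ∧
      ∀ i ∈ T, DependsOnlyOn Z (fun z => h z i) (S : Set (Fin d))) :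
    ∃ π : Equiv.Perm (Fin d), ∀ i : Fin d,
      DependsOnlyOn Z (fun z => h z (π i)) ({i} : Set (Fin d)) := by
  classical
  obtain ⟨z₀, hz₀⟩ := hZne
  have hdiff : ∀ z ∈ Z, DifferentiableAt ℝ h z := fun z hz =>
    ((hC1.differentiableOn one_ne_zero) z hz).differentiableAt (hZopen.mem_nhds hz)
  have hproj : ∀ (i : Fin d), ∀ z ∈ Z,
      HasFDerivAt (fun y => h y i)
        ((ContinuousLinearMap.proj (R := ℝ) (φ := fun _ : Fin d => ℝ) i).comp
          (fderiv ℝ h z)) z := fun i z hz => by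
    have hcp := (ContinuousLinearMap.hasFDerivAt
      (ContinuousLinearMap.proj (R := ℝ) (φ := fun _ : Fin d => ℝ) i)).comp z
      (hdiff z hz).hasFDerivAt
    exact hcp
  have hcompdiff : ∀ (i : Fin d), ∀ z ∈ Z, DifferentiableAt ℝ (fun y => h y i) z :=
    fun i z hz => (hproj i z hz).differentiableAt
  have hfd : ∀ (i : Fin d), ∀ z ∈ Z, ∀ v : Fin d → ℝ,
      fderiv ℝ (fun y => h y i) z v = fderiv ℝ h z v i := by
    intro i z hz v
    rw [(hproj i z hz).fderiv]
    rfl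
  have key : ∀ i : Fin d, ∃ j : Fin d,
      ∀ l : Fin d, l ≠ i → ∀ z ∈ Z,
        fderiv ℝ (fun y => h y j) z (Pi.single l 1) = 0 := by
    intro i
    obtain ⟨S, hS, S', hS', hSS⟩ := ha i
    obtain ⟨T, hTcard, hT⟩ := hb S hS
    obtain ⟨T', hT'card, hT'⟩ := hb S' hS'
    have hjex : ∃ j, j ∈ T ∩ T' := by
      by_contra hno
      push_neg at hno
      have hdisj : Disjoint T T' := Finset.disjoint_left.mpr fun a haT haT' =>
        hno a (Finset.mem_inter.mpr ⟨haT, haT'⟩)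
      have hzero : ∀ i' ∈ T ∪ T', ∀ j : Fin d, j ∉ S ∪ S' →
          (fderiv ℝ h z₀) (Pi.single j 1) i' = 0 := by
        intro i' hi' j hj
        rw [← hfd i' z₀ hz₀]
        rcases Finset.mem_union.mp hi' with hi'' | hi''
        · exact aux_lemA hZopen (hcompdiff i') (hT i' hi'')
            (fun hjS => hj (Finset.mem_union_left _ (Finset.mem_coe.mp hjS))) hz₀
        · exact aux_lemA hZopen (hcompdiff i') (hT' i' hi'')
            (fun hjS => hj (Finset.mem_union_right _ (Finset.mem_coe.mp hjS))) hz₀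
      have hle := aux_linalg (fderiv ℝ h z₀) (hinv z₀ hz₀) (S ∪ S') (T ∪ T') hzero
      have hU : (T ∪ T').card = (d - k) + (d - k) := by
        rw [Finset.card_union_of_disjoint hdisj, hTcard, hT'card]
      have hCC : (S ∪ S').card + 1 = (d - k) + (d - k) := by
        have hh := Finset.card_union_add_card_inter S S'
        rw [hSS, Finset.card_singleton, hcard S hS, hcard S' hS'] at hh
        omega
      have hUd : (T ∪ T').card ≤ d := by
        simpa using Finset.card_le_card (Finset.subset_univ (T ∪ T'))
      omega
    obtain ⟨j, hj⟩ := hjex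
    obtain ⟨hjT, hjT'⟩ := Finset.mem_inter.mp hj
    refine ⟨j, fun l hl z hz => ?_⟩
    have hls : l ∉ S ∨ l ∉ S' := by
      by_contra hc2
      push_neg at hc2
      have hmem : l ∈ S ∩ S' := Finset.mem_inter.mpr ⟨hc2.1, hc2.2⟩
      rw [hSS] at hmem
      exact hl (Finset.mem_singleton.mp hmem)
    rcases hls with hls | hls
    · exact aux_lemA hZopen (hcompdiff j) (hT j hjT)
        (fun hmem => hls (Finset.mem_coe.mp hmem)) hz
    · exact aux_lemA hZopen (hcompdiff j) (hT' j hjT')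
        (fun hmem => hls (Finset.mem_coe.mp hmem)) hz
  choose f hf using key
  have hinj : Function.Injective f := by
    intro i i' hii'
    by_contra hne
    have hall : ∀ l : Fin d, fderiv ℝ h z₀ (Pi.single l 1) (f i) = 0 := by
      intro l
      rw [← hfd (f i) z₀ hz₀]
      rcases ne_or_eq l i with hl | rfl
      · exact hf i l hl z₀ hz₀
      · rw [hii']
        exact hf i' l hne z₀ hz₀
    obtain ⟨v, hv⟩ := (hinv z₀ hz₀).2 (Pi.single (f i) 1)
    have hv1 : fderiv ℝ h z₀ v (f i) = 1 := by rw [hv]; simp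
    have hv0 : fderiv ℝ h z₀ v (f i) = 0 := by
      have hvs : v = ∑ l : Fin d, Pi.single l (v l) := (Finset.univ_sum_single v).symm
      rw [hvs, map_sum, Finset.sum_apply]
      refine Finset.sum_eq_zero fun l _ => ?_
      rw [pi_single_eq_smul, map_smul]
      simp [hall l]
    rw [hv1] at hv0
    norm_num at hv0
  have hbij : Function.Bijective f := Finite.injective_iff_bijective.mp hinj
  refine ⟨Equiv.ofBijective f hbij, fun i => ?_⟩
  have hπ : Equiv.ofBijective f hbij i = f i := rfl
  rw [hπ]
  exact aux_lemB hZopen hZconv (hcompdiff (f i)) (fun z hz j hjne => hf i j hjne z hz)
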